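/- Let T be a quiver with exactly one vertex t whose arrows form a type M, let R and S be quivers, and let F : R ⥤q T and G : S ⥤q T be prefunctors. Define the pullback quiver P with vertex type R₀ × S₀, where an arrow from (r,s) to (r',s') is a pair (e : r ⟶ r', f : s ⟶ s') such that F.map e = G.map f. Then for all vertices r, r' of R and s, s' of S there is a bijection between the type of paths from (r,s) to (r',s') in P and the type of pairs (p, q), where p is a path from r to r' in R and q is a path from s to s' in S, such that F.mapPath p = G.mapPath q (an equality of paths from t to t in T). -/

import Mathlib

open Quiver

universe u v

/-- The pullback quiver of two prefunctors `F : R ⥤q SingleObj M` and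
`G : S ⥤q SingleObj M`: vertices are pairs, and an arrow `(r,s) ⟶ (r',s')` is a pair of
arrows `e : r ⟶ r'`, `f : s ⟶ s'` with `F.map e = G.map f`. -/
@[nolint unusedArguments]
def PullbackQuiver {M : Type v} (R S : Type u) [Quiver.{v+1} R] [Quiver.{v+1} S]
    (_F : R ⥤q SingleObj M) (_G : S ⥤q SingleObj M) : Type u := R × S

instance {M : Type v} (R S : Type u) [Quiver.{v+1} R] [Quiver.{v+1} S]
    (F : R ⥤q SingleObj M) (G : S ⥤q SingleObj M) :
    Quiver (PullbackQuiver R S F G) :=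
  ⟨fun p q => {ef : ((p : R × S).1 ⟶ (q : R × S).1) × ((p : R × S).2 ⟶ (q : R × S).2) //
    F.map ef.1 = G.map ef.2}⟩

section Aux

variable {M : Type v} {R S : Type u} [Quiver.{v+1} R] [Quiver.{v+1} S]
    (F : R ⥤q SingleObj M) (G : S ⥤q SingleObj M)

/-- First projection prefunctor from the pullback quiver. -/
def pbπ₁ : PullbackQuiver R S F G ⥤q R := ⟨Prod.fst, fun e => e.1.1⟩

/-- Second projection prefunctor from the pullback quiver. -/
def pbπ₂ : PullbackQuiver R S F G ⥤q S := ⟨Prod.snd, fun e => e.1.2⟩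

lemma pb_mapPath_comm {a b : PullbackQuiver R S F G} (p : Path a b) :
    F.mapPath ((pbπ₁ F G).mapPath p) = G.mapPath ((pbπ₂ F G).mapPath p) := by
  induction p with
  | nil => rfl
  | cons p e ih =>
    simp only [Prefunctor.mapPath_cons, ih]
    exact congrArg _ e.2

lemma pb_inj {a b : PullbackQuiver R S F G} (p : Path a b) :
    ∀ {p' : Path a b}, (pbπ₁ F G).mapPath p = (pbπ₁ F G).mapPath p' →
      (pbπ₂ F G).mapPath p = (pbπ₂ F G).mapPath p' → p = p' := by
  induction p with
  | nil =>
    intro p' h1 _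
    cases p' with
    | nil => rfl
    | cons q e => simp [Prefunctor.mapPath_cons] at h1
  | @cons c _ p e ih =>
    intro p' h1 h2
    cases p' with
    | nil => simp [Prefunctor.mapPath_cons] at h1
    | @cons c' _ q f =>
      simp only [Prefunctor.mapPath_cons] at h1 h2
      have hv1 := Path.obj_eq_of_cons_eq_cons h1
      have hv2 := Path.obj_eq_of_cons_eq_cons h2
      have hv : c = c' := Prod.ext hv1 hv2
      subst hv
      have hp1 := eq_of_heq (Path.heq_of_cons_eq_cons h1)
      have hp2 := eq_of_heq (Path.heq_of_cons_eq_cons h2)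
      have he1 := eq_of_heq (Path.hom_heq_of_cons_eq_cons h1)
      have he2 := eq_of_heq (Path.hom_heq_of_cons_eq_cons h2)
      rw [ih hp1 hp2]
      congr 1
      exact Subtype.ext (Prod.ext he1 he2)

lemma pb_surj {a : R} {b : S} :
    ∀ {a' : R} (p : Path a a') {b' : S} (q : Path b b'),
      F.mapPath p = G.mapPath q →
      ∃ x : Path (V := PullbackQuiver R S F G) (a, b) (a', b'),
        (pbπ₁ F G).mapPath x = p ∧ (pbπ₂ F G).mapPath x = q := by
  intro a' p
  induction p with
  | nil =>
    intro b' q h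
    cases q with
    | nil => exact ⟨Path.nil, rfl, rfl⟩
    | cons q f => simp [Prefunctor.mapPath_cons] at h
  | cons p e ih =>
    intro b' q h
    cases q with
    | nil => simp [Prefunctor.mapPath_cons] at h
    | cons q f =>
      simp only [Prefunctor.mapPath_cons] at h
      have hp := eq_of_heq (Path.heq_of_cons_eq_cons h)
      have he := eq_of_heq (Path.hom_heq_of_cons_eq_cons h)
      obtain ⟨x, hx1, hx2⟩ := ih q hp
      exact ⟨x.cons ⟨(e, f), he⟩, by
        exact congrArg (fun y => Path.cons y e) hx1, by
        exact congrArg (fun y => Path.cons y f) hx2⟩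

end Aux

/-- Let `T = SingleObj M` be a quiver with exactly one vertex whose arrows
form the type `M`, let `F : R ⥤q T` and `G : S ⥤q T` be prefunctors, and let `P` be the
pullback quiver. Then paths in `P` from `(r,s)` to `(r',s')` are in bijection with pairs
of paths `(p, q)`, `p : Path r r'` in `R` and `q : Path s s'` in `S`, such that
`F.mapPath p = G.mapPath q`. -/
theorem statement3 {M : Type v} (R S : Type u) [Quiver.{v+1} R] [Quiver.{v+1} S]
    (F : R ⥤q SingleObj M) (G : S ⥤q SingleObj M) (r r' : R) (s s' : S) :
    Nonempty (Quiver.Path (V := PullbackQuiver R S F G) (r, s) (r', s') ≃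
      {pq : Path r r' × Path s s' // F.mapPath pq.1 = G.mapPath pq.2}) := by
  refine ⟨Equiv.ofBijective
    (fun x => ⟨((pbπ₁ F G).mapPath x, (pbπ₂ F G).mapPath x), pb_mapPath_comm F G x⟩)
    ⟨fun x y h => ?_, fun z => ?_⟩⟩
  · have h' := congrArg Subtype.val h
    exact pb_inj F G x (congrArg Prod.fst h') (congrArg Prod.snd h')
  · obtain ⟨⟨p, q⟩, h⟩ := z
    obtain ⟨x, hx1, hx2⟩ := pb_surj F G p q h
    exact ⟨x, by simp [hx1, hx2]⟩
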